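/- Let θ₀ ∈ (0,1) and θ₁ > 0, and suppose g_n(z) satisfies g_n(z) = (z/(1 − θ₀ z))·[2 + ∑_{l=1}^k θ_l g_{n−l}(z)] with g_n = 0 for n ≤ 0, where θ_l ≥ 0 are constants. Then each g_n is a rational function whose unique pole is at z₀ = 1/θ₀, the pole has order n, and the leading (most singular) Laurent term at z₀ is 2·θ₁^{n−1}·(z/(1 − θ₀ z))^n's leading term; equivalently lim_{z→z₀} (z₀ − z)^n g_n(z) = 2·θ₁^{n−1}·θ₀^{−2n}. -/

import Mathlib

open Filter

/-- For the generating functions `g_n` of `k`-point simplex learning, satisfying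
`g_n(z) = (z/(1 − θ₀ z))·[2 + ∑_{l=1}^k θ_l g_{n−l}(z)]` with `g_n = 0` for `n ≤ 0`,
each `g_n` (for `n ≥ 1`) is analytic away from `z₀ = 1/θ₀`, where it has a pole of
order exactly `n`: `lim_{z→z₀} (z₀ − z)^n g_n(z) = 2·θ₁^{n−1}·θ₀^{−2n}`. -/
theorem simplex_generating_function_singularity
    (k : ℕ) (hk : 1 ≤ k)
    (θ₀ : ℝ) (hθ₀ : θ₀ ∈ Set.Ioo (0 : ℝ) 1)
    (θ : ℕ → ℝ) (hθ : ∀ l, 1 ≤ l → l ≤ k → 0 ≤ θ l) (hθ₁ : 0 < θ 1)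
    (g : ℤ → ℂ → ℂ)
    (hzero : ∀ n : ℤ, n ≤ 0 → g n = 0)
    (hrec : ∀ n : ℤ, 1 ≤ n → ∀ z : ℂ, z ≠ (θ₀ : ℂ)⁻¹ →
      g n z = z / (1 - (θ₀ : ℂ) * z) * (2 + ∑ l ∈ Finset.Icc 1 k, (θ l : ℂ) * g (n - (l : ℤ)) z)) :
    ∀ n : ℕ, 1 ≤ n →
      AnalyticOn ℂ (g (n : ℤ)) {z : ℂ | z ≠ (θ₀ : ℂ)⁻¹} ∧
      Tendsto (fun z : ℂ => ((θ₀ : ℂ)⁻¹ - z) ^ n * g (n : ℤ) z)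
        (nhdsWithin ((θ₀ : ℂ)⁻¹) {z : ℂ | z ≠ (θ₀ : ℂ)⁻¹})
        (nhds ((2 * θ 1 ^ (n - 1) * θ₀ ^ (-(2 : ℤ) * n) : ℝ) : ℂ)) := by
  obtain ⟨hθ0pos, hθ0lt⟩ := hθ₀
  have hθc : (θ₀ : ℂ) ≠ 0 := by exact_mod_cast hθ0pos.ne'
  set z₀ : ℂ := (θ₀ : ℂ)⁻¹ with hz₀
  set S : Set ℂ := {z : ℂ | z ≠ (θ₀ : ℂ)⁻¹} with hSdef
  have hfac : ∀ z : ℂ, 1 - (θ₀ : ℂ) * z = (θ₀ : ℂ) * (z₀ - z) := by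
    intro z
    rw [mul_sub, hz₀, mul_inv_cancel₀ hθc]
  have hsub : ∀ z ∈ S, z₀ - z ≠ 0 := by
    intro z hz
    exact sub_ne_zero.mpr (Ne.symm hz)
  -- Part 1 : analyticity
  have hA : ∀ m : ℕ, ∀ n : ℤ, n ≤ (m : ℤ) → AnalyticOn ℂ (g n) S := by
    intro m
    induction m with
    | zero =>
      intro n hn
      rw [hzero n (by exact_mod_cast hn)]
      exact analyticOn_const
    | succ m ih =>
      intro n hn
      by_cases h0 : n ≤ 0
      · rw [hzero n h0]; exact analyticOn_const
      push_neg at h0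
      have h1 : 1 ≤ n := h0
      have hF : AnalyticOn ℂ
          (fun z : ℂ => z / (1 - (θ₀ : ℂ) * z) *
            (2 + ∑ l ∈ Finset.Icc 1 k, (θ l : ℂ) * g (n - (l : ℤ)) z)) S := by
        apply AnalyticOn.mul
        · apply AnalyticOn.div (analyticOnNhd_id.analyticOn)
          · exact (analyticOn_const.sub (analyticOn_const.mul (analyticOnNhd_id.analyticOn)))
          · intro z hz
            rw [hfac]
            exact mul_ne_zero hθc (hsub z hz)
        · apply analyticOn_const.add
          apply Finset.analyticOn_fun_sum
          intro l hl
          apply analyticOn_const.mul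
          apply ih
          have := (Finset.mem_Icc.mp hl).1
          push_cast at hn ⊢
          omega
      exact hF.congr (fun z hz => hrec n h1 z hz)
  -- Part 2 : the limit
  have hT : ∀ n : ℕ, 1 ≤ n →
      Tendsto (fun z : ℂ => (z₀ - z) ^ n * g (n : ℤ) z)
        (nhdsWithin z₀ S)
        (nhds ((2 * θ 1 ^ (n - 1) * θ₀ ^ (-(2 : ℤ) * n) : ℝ) : ℂ)) := by
    intro n
    induction n using Nat.strong_induction_on with
    | _ n ih =>
    intro hn
    obtain ⟨m, rfl⟩ : ∃ m, n = m + 1 := ⟨n - 1, by omega⟩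
    set n := m + 1
    -- limit constants for the summands
    set C : ℕ → ℂ := fun l =>
      if (n : ℤ) - (l : ℤ) ≤ 0 then 0
      else (0 : ℂ) ^ (l - 1) * ((2 * θ 1 ^ (n - l - 1) * θ₀ ^ (-(2 : ℤ) * (n - l)) : ℝ) : ℂ)
      with hC
    -- pointwise identity on S
    have heq : ∀ z ∈ S, (z₀ - z) ^ n * g (n : ℤ) z
        = z / (θ₀ : ℂ) * (2 * (z₀ - z) ^ m
            + ∑ l ∈ Finset.Icc 1 k, (θ l : ℂ) * ((z₀ - z) ^ m * g ((n : ℤ) - (l : ℤ)) z)) := by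
      intro z hz
      rw [hrec (n : ℤ) (by exact_mod_cast hn) z hz, hfac]
      have h1 : (z₀ - z) ^ n * (z / ((θ₀ : ℂ) * (z₀ - z)) *
          (2 + ∑ l ∈ Finset.Icc 1 k, (θ l : ℂ) * g ((n : ℤ) - (l : ℤ)) z))
          = z / (θ₀ : ℂ) * ((z₀ - z) ^ m *
          (2 + ∑ l ∈ Finset.Icc 1 k, (θ l : ℂ) * g ((n : ℤ) - (l : ℤ)) z)) := by
        have hzne := hsub z hz
        field_simp
        ring
      rw [h1]
      congr 1
      rw [mul_add, Finset.mul_sum]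
      congr 1
      · ring
      · exact Finset.sum_congr rfl fun l _ => by ring
    -- tendsto of each summand
    have hterm : ∀ l ∈ Finset.Icc 1 k,
        Tendsto (fun z : ℂ => (θ l : ℂ) * ((z₀ - z) ^ m * g ((n : ℤ) - (l : ℤ)) z))
          (nhdsWithin z₀ S) (nhds ((θ l : ℂ) * C l)) := by
      intro l hl
      obtain ⟨hl1, hlk⟩ := Finset.mem_Icc.mp hl
      apply Tendsto.const_mul
      by_cases hnl : (n : ℤ) - (l : ℤ) ≤ 0
      · have : g ((n : ℤ) - (l : ℤ)) = 0 := hzero _ hnl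
        rw [hC]
        simp only [hnl, if_true]
        simp only [this]
        simpa using tendsto_const_nhds
      · push_neg at hnl
        set p : ℕ := n - l with hp
        have hpl : (n : ℤ) - (l : ℤ) = (p : ℤ) := by push_cast [hp]; omega
        have hp1 : 1 ≤ p := by omega
        have hpn : p < n := by omega
        have hml : m = (l - 1) + p := by omega
        have hIH := ih p hpn hp1
        rw [hC]
        simp only [hnl.not_ge, if_false]
        have key : Tendsto (fun z : ℂ => (z₀ - z) ^ (l - 1) * ((z₀ - z) ^ p * g (p : ℤ) z))
            (nhdsWithin z₀ S)
            (nhds ((0 : ℂ) ^ (l - 1) * ((2 * θ 1 ^ (p - 1) * θ₀ ^ (-(2 : ℤ) * p) : ℝ) : ℂ))) := by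
          apply Tendsto.mul _ hIH
          have : Tendsto (fun z : ℂ => (z₀ - z) ^ (l - 1)) (nhds z₀) (nhds ((z₀ - z₀) ^ (l - 1))) :=
            ((continuous_const.sub continuous_id).pow (l - 1)).tendsto z₀
          simpa using this.mono_left nhdsWithin_le_nhds
        have hfun : (fun z : ℂ => (z₀ - z) ^ m * g ((n : ℤ) - (l : ℤ)) z)
            = fun z : ℂ => (z₀ - z) ^ (l - 1) * ((z₀ - z) ^ p * g (p : ℤ) z) := by
          funext z
          rw [hpl, hml, pow_add, mul_assoc]
        rw [hfun, hpl]
        convert key using 4 <;> omega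
    have hsum : Tendsto (fun z : ℂ => ∑ l ∈ Finset.Icc 1 k,
          (θ l : ℂ) * ((z₀ - z) ^ m * g ((n : ℤ) - (l : ℤ)) z))
        (nhdsWithin z₀ S) (nhds (∑ l ∈ Finset.Icc 1 k, (θ l : ℂ) * C l)) :=
      tendsto_finset_sum _ hterm
    have h2 : Tendsto (fun z : ℂ => 2 * (z₀ - z) ^ m) (nhdsWithin z₀ S)
        (nhds (2 * (0 : ℂ) ^ m)) := by
      have : Tendsto (fun z : ℂ => 2 * (z₀ - z) ^ m) (nhds z₀) (nhds (2 * (z₀ - z₀) ^ m)) :=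
        (continuous_const.mul ((continuous_const.sub continuous_id).pow m)).tendsto z₀
      simpa using this.mono_left nhdsWithin_le_nhds
    have h0 : Tendsto (fun z : ℂ => z / (θ₀ : ℂ)) (nhdsWithin z₀ S) (nhds (z₀ / (θ₀ : ℂ))) :=
      ((continuous_id.div_const _).tendsto z₀).mono_left nhdsWithin_le_nhds
    have hmain : Tendsto (fun z : ℂ => z / (θ₀ : ℂ) * (2 * (z₀ - z) ^ m
          + ∑ l ∈ Finset.Icc 1 k, (θ l : ℂ) * ((z₀ - z) ^ m * g ((n : ℤ) - (l : ℤ)) z)))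
        (nhdsWithin z₀ S)
        (nhds (z₀ / (θ₀ : ℂ) * (2 * (0 : ℂ) ^ m + ∑ l ∈ Finset.Icc 1 k, (θ l : ℂ) * C l))) :=
      h0.mul (h2.add hsum)
    have hval : z₀ / (θ₀ : ℂ) * (2 * (0 : ℂ) ^ m + ∑ l ∈ Finset.Icc 1 k, (θ l : ℂ) * C l)
        = ((2 * θ 1 ^ (n - 1) * θ₀ ^ (-(2 : ℤ) * n) : ℝ) : ℂ) := by
      rcases Nat.eq_zero_or_pos m with hm0 | hm1
      · -- n = 1
        subst hm0
        have hCz : ∀ l ∈ Finset.Icc 1 k, (θ l : ℂ) * C l = 0 := by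
          intro l hl
          obtain ⟨hl1, _⟩ := Finset.mem_Icc.mp hl
          rw [hC]
          simp only [show ((0 + 1 : ℕ) : ℤ) - (l : ℤ) ≤ 0 by push_cast; omega, if_true]
          simp [show ¬ (l < n) from by show ¬ (l < 0 + 1); omega]
        rw [Finset.sum_eq_zero hCz]
        have hzz : z₀ / (θ₀:ℂ) = (θ₀:ℂ) ^ (-2:ℤ) := by
          rw [hz₀, div_eq_mul_inv, ← zpow_neg_one, ← zpow_add₀ hθc]
          norm_num
        rw [hzz]
        push_cast
        norm_num
        ring
      · -- n ≥ 2
        have h0m : (0 : ℂ) ^ m = 0 := zero_pow (by omega)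
        have hsum1 : ∑ l ∈ Finset.Icc 1 k, (θ l : ℂ) * C l = (θ 1 : ℂ) * C 1 := by
          apply Finset.sum_eq_single 1
          · intro l hl hne
            obtain ⟨hl1, _⟩ := Finset.mem_Icc.mp hl
            have hl2 : 2 ≤ l := by omega
            rw [hC]
            by_cases hc : (n : ℤ) - (l : ℤ) ≤ 0
            · simp [hc]
            · simp only [hc, if_false]
              rw [zero_pow (by omega : l - 1 ≠ 0)]
              ring
          · intro h1
            exact absurd (Finset.mem_Icc.mpr ⟨le_refl 1, hk⟩) h1
        rw [hsum1, h0m, hC]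
        simp only [show ¬((n : ℤ) - ((1 : ℕ) : ℤ) ≤ 0) by push_cast; omega, if_false]
        rw [pow_zero, one_mul]
        have e1 : n - 1 - 1 = m - 1 := by omega
        have e2 : n - 1 = m := by omega
        rw [e1, e2]
        push_cast [n]
        have e3 : (-(2:ℤ) * ((m:ℤ) + 1 - 1)) = -2 * (m:ℤ) := by ring
        rw [e3]
        have hzz : z₀ / (θ₀:ℂ) = (θ₀:ℂ) ^ (-2:ℤ) := by
          rw [hz₀, div_eq_mul_inv, ← zpow_neg_one, ← zpow_add₀ hθc]
          norm_num
        rw [hzz]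
        have ht : (θ 1 : ℂ) * (θ 1 : ℂ) ^ (m - 1) = (θ 1 : ℂ) ^ m := by
          rw [← pow_succ']
          congr 1
          omega
        calc (θ₀:ℂ)^(-2:ℤ) * (2*0 + (θ 1 : ℂ) * (2 * (θ 1 : ℂ)^(m-1) * (θ₀:ℂ)^(-2*(m:ℤ))))
            = 2 * ((θ 1 : ℂ) * (θ 1 : ℂ)^(m-1)) * ((θ₀:ℂ)^(-2:ℤ) * (θ₀:ℂ)^(-2*(m:ℤ))) := by
              ring
          _ = 2 * (θ 1 : ℂ)^m * (θ₀:ℂ)^(-2*((m:ℤ)+1)) := by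
              rw [ht, ← zpow_add₀ hθc]
              congr 1
              ring
    rw [show (nhds ((2 * θ 1 ^ (n - 1) * θ₀ ^ (-(2 : ℤ) * n) : ℝ) : ℂ))
        = (nhds (z₀ / (θ₀ : ℂ) * (2 * (0 : ℂ) ^ m + ∑ l ∈ Finset.Icc 1 k, (θ l : ℂ) * C l)))
        from by rw [hval]]
    exact hmain.congr' (eventuallyEq_nhdsWithin_of_eqOn (fun z hz => (heq z hz).symm))
  intro n hn
  exact ⟨hA n (n : ℤ) le_rfl, hT n hn⟩
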